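/- α-morphisms preserve reachable markings and transition firings: if φ: N1 → N2 is an α-morphism and m1 is reachable in N1, then φ(m1) is reachable in N2; moreover if m1[t⟩m1' in N1, then either φ(t) ∈ T2 and φ(m1)[φ(t)⟩φ(m1') in N2, or φ(t) ∈ P2 and φ(m1) = φ(m1'). -/

import Mathlib

/-- A (marked) Petri net over a universe `X` of nodes, with markings of safe
nets identified with sets of places. -/
structure PNet (X : Type) where
  P : Set X
  T : Set X
  F : Set (X × X)
  m0 : Set X
  mf : Set X

namespace PNet

variable {X : Type}

def nodes (N : PNet X) : Set X := N.P ∪ N.T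

def pre (N : PNet X) (x : X) : Set X := {y | (y, x) ∈ N.F}

def post (N : PNet X) (x : X) : Set X := {y | (x, y) ∈ N.F}

def preS (N : PNet X) (A : Set X) : Set X := ⋃ x ∈ A, N.pre x

def postS (N : PNet X) (A : Set X) : Set X := ⋃ x ∈ A, N.post x

def nbhd (N : PNet X) (x : X) : Set X := N.pre x ∪ N.post x

def nbhdS (N : PNet X) (A : Set X) : Set X := N.preS A ∪ N.postS A

/-- Basic structural conditions on a Petri net. -/
def IsNet (N : PNet X) : Prop :=
  Disjoint N.P N.T ∧
  N.F ⊆ (N.P ×ˢ N.T) ∪ (N.T ×ˢ N.P) ∧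
  (∀ t ∈ N.T, (N.pre t).Nonempty ∧ (N.post t).Nonempty) ∧
  N.m0 ⊆ N.P ∧ N.mf ⊆ N.P

/-- Reflexive-transitive closure `F*` of the flow relation. -/
def FStar (N : PNet X) (x y : X) : Prop :=
  Relation.ReflTransGen (fun a b => (a, b) ∈ N.F) x y

/-- Transition `t` is enabled at marking `m` (markings of safe nets as sets). -/
def enabled (N : PNet X) (m : Set X) (t : X) : Prop := t ∈ N.T ∧ N.pre t ⊆ m

/-- Firing of `t` at marking `m`. -/
def fire (N : PNet X) (m : Set X) (t : X) : Set X := (m \ N.pre t) ∪ N.post t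

def step (N : PNet X) (m m' : Set X) : Prop := ∃ t, N.enabled m t ∧ m' = N.fire m t

/-- The set of markings reachable from `m`. -/
def reach (N : PNet X) (m : Set X) : Set (Set X) := {m' | Relation.ReflTransGen N.step m m'}

/-- Generalized workflow net (Definition 3). -/
def IsGWF (N : PNet X) : Prop :=
  N.m0 = {p ∈ N.P | N.pre p = ∅} ∧ N.m0.Nonempty ∧
  N.mf = {p ∈ N.P | N.post p = ∅} ∧ N.mf.Nonempty ∧
  ∀ x ∈ N.nodes, ∃ s ∈ N.m0, ∃ f ∈ N.mf, N.FStar s x ∧ N.FStar x f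

/-- Soundness of a GWF-net. -/
def Sound (N : PNet X) : Prop :=
  (∀ m ∈ N.reach N.m0, N.mf ∈ N.reach m) ∧
  (∀ m ∈ N.reach N.m0, N.mf ⊆ m → m = N.mf) ∧
  (∀ t ∈ N.T, ∃ m ∈ N.reach N.m0, N.enabled m t)

/-- Subnet generated by a set `A` of nodes. -/
def subnet (N : PNet X) (A : Set X) : PNet X :=
  ⟨N.P ∩ A, N.T ∩ A, N.F ∩ (A ×ˢ A), N.m0 ∩ A, N.mf ∩ A⟩

/-- Input elements of the subnet generated by `A`. -/
def inputs (N : PNet X) (A : Set X) : Set X :=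
  {y ∈ A | (∃ z ∈ N.nodes \ A, (z, y) ∈ N.F) ∨ N.pre y = ∅}

/-- Output elements of the subnet generated by `A`. -/
def outputs (N : PNet X) (A : Set X) : Set X :=
  {y ∈ A | (∃ z ∈ N.nodes \ A, (y, z) ∈ N.F) ∨ N.post y = ∅}

/-- A connected net in which every transition has exactly one input and one
output place. -/
def IsStateMachine (N : PNet X) : Prop :=
  (∀ x ∈ N.nodes, ∀ y ∈ N.nodes,
     Relation.ReflTransGen (fun a b => (a, b) ∈ N.F ∨ (b, a) ∈ N.F) x y) ∧
  ∀ t ∈ N.T, (∃ p, N.pre t = {p}) ∧ (∃ q, N.post t = {q})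

/-- `A` (a set of places, taken with its neighborhood) generates a sequential
component of `N`: a state machine with a single token initially. -/
def IsSeqComp (N : PNet X) (A : Set X) : Prop :=
  A ⊆ N.P ∧ IsStateMachine (N.subnet (A ∪ N.nbhdS A)) ∧ ∃ p, N.m0 ∩ A = {p}

/-- State machine decomposability. -/
def SMD (N : PNet X) : Prop := ∀ p ∈ N.P, ∃ A, N.IsSeqComp A ∧ p ∈ A

/-- Inverse image of a node of `N2` under `φ`, inside the nodes of `N1`. -/
def inv (N1 : PNet X) (φ : X → X) (x2 : X) : Set X := {x ∈ N1.nodes | φ x = x2}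

def Acyclic (N : PNet X) : Prop := ∀ x, ¬ Relation.TransGen (fun a b => (a, b) ∈ N.F) x x

/-- α-morphism from `N1` to `N2` (Definition 5). -/
def IsAlpha (N1 N2 : PNet X) (φ : X → X) : Prop :=
  (∀ x ∈ N1.nodes, φ x ∈ N2.nodes) ∧
  (∀ x2 ∈ N2.nodes, ∃ x1 ∈ N1.nodes, φ x1 = x2) ∧
  φ '' N1.P = N2.P ∧
  φ '' N1.m0 = N2.m0 ∧
  (∀ t ∈ N1.T, φ t ∈ N2.T →
     φ '' N1.pre t = N2.pre (φ t) ∧ φ '' N1.post t = N2.post (φ t)) ∧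
  (∀ t ∈ N1.T, φ t ∈ N2.P → φ '' N1.nbhd t = {φ t}) ∧
  ∀ p2 ∈ N2.P,
    Acyclic (N1.subnet (N1.inv φ p2)) ∧
    (∀ p ∈ N1.inputs (N1.inv φ p2) ∩ N1.P,
       φ '' N1.pre p ⊆ N2.pre p2 ∧ ((N2.pre p2).Nonempty → (N1.pre p).Nonempty)) ∧
    (∀ p ∈ N1.outputs (N1.inv φ p2) ∩ N1.P, φ '' N1.post p = N2.post p2) ∧
    (∀ p ∈ N1.inv φ p2 ∩ N1.P,
       (p ∉ N1.inputs (N1.inv φ p2) → φ '' N1.pre p = {p2}) ∧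
       (p ∉ N1.outputs (N1.inv φ p2) → φ '' N1.post p = {p2})) ∧
    (∀ p ∈ N1.inv φ p2 ∩ N1.P,
       ∃ A, N1.IsSeqComp A ∧ p ∈ A ∧ {t ∈ N1.T | φ t ∈ N2.nbhd p2} ⊆ N1.nbhdS A)

/-- `N1` is well marked w.r.t. an α-morphism `φ : N1 → N2`. -/
def WellMarked (N1 N2 : PNet X) (φ : X → X) : Prop :=
  ∀ p2 ∈ N2.m0, ∀ p ∈ N1.inputs (N1.inv φ p2) ∩ N1.P, p ∈ N1.m0

/-- `N` is the channel-composition `N1 ⊕_{Pc} N2` (Definition 4). -/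
def IsChanComp (N1 N2 : PNet X) (Pc : Set X) (N : PNet X) : Prop :=
  Disjoint N1.nodes N2.nodes ∧
  Disjoint Pc (N1.nodes ∪ N2.nodes) ∧
  N.P = N1.P ∪ N2.P ∪ Pc ∧
  N.T = N1.T ∪ N2.T ∧
  N1.F ⊆ N.F ∧ N2.F ⊆ N.F ∧
  N.F \ (N1.F ∪ N2.F) ⊆ (Pc ×ˢ (N1.T ∪ N2.T)) ∪ ((N1.T ∪ N2.T) ×ˢ Pc) ∧
  N.m0 = N1.m0 ∪ N2.m0 ∧
  N.mf = N1.mf ∪ N2.mf ∧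
  ∀ p ∈ Pc,
    ((N.pre p ⊆ N1.T ∧ N.post p ⊆ N2.T) ∨ (N.pre p ⊆ N2.T ∧ N.post p ⊆ N1.T)) ∧
    (N.pre p).Nonempty ∧ (N.post p).Nonempty

/-- `N'` is the refined channel-composition `N1' ⊕_{Pc} N2` obtained from
`Nc = N1 ⊕_{Pc} N2` by refining `N1` with `N1'` along `φ1` (Definition 6). -/
def IsRefChanComp (N1' N2 : PNet X) (Pc : Set X) (φ1 : X → X) (Nc N' : PNet X) : Prop :=
  N'.P = N1'.P ∪ N2.P ∪ Pc ∧
  N'.T = N1'.T ∪ N2.T ∧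
  N1'.F ⊆ N'.F ∧
  (N'.F ∩ (((N2.P ∪ Pc) ×ˢ N2.T) ∪ (N2.T ×ˢ (N2.P ∪ Pc)))
     = Nc.F ∩ (((N2.P ∪ Pc) ×ˢ N2.T) ∪ (N2.T ×ˢ (N2.P ∪ Pc)))) ∧
  N'.F ⊆ N1'.F ∪ (((N2.P ∪ Pc) ×ˢ N2.T) ∪ (N2.T ×ˢ (N2.P ∪ Pc)))
         ∪ ((Pc ×ˢ N1'.T) ∪ (N1'.T ×ˢ Pc)) ∧
  (∀ p ∈ Pc, ∀ t' ∈ N1'.T,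
     ((t', p) ∈ N'.F ↔ (φ1 t', p) ∈ Nc.F) ∧ ((p, t') ∈ N'.F ↔ (p, φ1 t') ∈ Nc.F)) ∧
  N'.m0 = N1'.m0 ∪ N2.m0 ∧
  N'.mf = N1'.mf ∪ N2.mf

/-! ### ℕ-valued markings (general, not necessarily safe, semantics) -/

/-- The initial marking of `N` as an ℕ-valued marking. -/
noncomputable def markN (N : PNet X) : X → ℕ := N.m0.indicator 1

def enabledN (N : PNet X) (m : X → ℕ) (t : X) : Prop :=
  t ∈ N.T ∧ ∀ p ∈ N.pre t, 1 ≤ m p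

noncomputable def fireN (N : PNet X) (m : X → ℕ) (t : X) : X → ℕ :=
  fun p => m p - (N.pre t).indicator 1 p + (N.post t).indicator 1 p

def stepN (N : PNet X) (m m' : X → ℕ) : Prop := ∃ t, N.enabledN m t ∧ m' = N.fireN m t

def reachN (N : PNet X) (m : X → ℕ) : Set (X → ℕ) := {m' | Relation.ReflTransGen N.stepN m m'}

/-! ### Occurrence nets and branching processes -/

/-- Conflict relation. -/
def conflict (N : PNet X) (x y : X) : Prop :=
  ∃ tx ∈ N.T, ∃ ty ∈ N.T, tx ≠ ty ∧ (N.pre tx ∩ N.pre ty).Nonempty ∧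
    N.FStar tx x ∧ N.FStar ty y

/-- Occurrence net (Definition 1). -/
def IsOccNet (N : PNet X) : Prop :=
  Disjoint N.P N.T ∧
  N.F ⊆ (N.P ×ˢ N.T) ∪ (N.T ×ˢ N.P) ∧
  (∀ b ∈ N.P, (N.pre b).Subsingleton) ∧
  (∀ x y, N.FStar x y → N.FStar y x → x = y) ∧
  (∀ x ∈ N.nodes, {y | N.FStar y x}.Finite) ∧
  (∀ x ∈ N.nodes, ¬ N.conflict x x)

/-- Minimal nodes of an occurrence net w.r.t. `F*`. -/
def MinO (N : PNet X) : Set X := {x ∈ N.nodes | N.pre x = ∅}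

/-- `(O, π)` is a branching process of `N` (Definition 2). -/
def IsBranchingProcess (N O : PNet X) (π : X → X) : Prop :=
  IsOccNet O ∧
  π '' O.P ⊆ N.P ∧ π '' O.T ⊆ N.T ∧
  Set.BijOn π (MinO O) N.m0 ∧
  (∀ e ∈ O.T, Set.BijOn π (O.pre e) (N.pre (π e)) ∧ Set.BijOn π (O.post e) (N.post (π e))) ∧
  (∀ e1 ∈ O.T, ∀ e2 ∈ O.T, O.pre e1 = O.pre e2 → π e1 = π e2 → e1 = e2)

end PNet

namespace PNet

variable {X : Type}

lemma mem_P_of_pre {N : PNet X} (hn : N.IsNet) {t y : X} (ht : t ∈ N.T)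
    (hy : y ∈ N.pre t) : y ∈ N.P := by
  rcases hn.2.1 hy with h | h
  · exact h.1
  · exact absurd ht (Set.disjoint_left.mp hn.1 h.2)

lemma mem_P_of_post {N : PNet X} (hn : N.IsNet) {t y : X} (ht : t ∈ N.T)
    (hy : y ∈ N.post t) : y ∈ N.P := by
  rcases hn.2.1 hy with h | h
  · exact absurd ht (Set.disjoint_left.mp hn.1 h.1)
  · exact h.2

lemma nbhdS_sub_T {N : PNet X} (hn : N.IsNet) {A : Set X} (hA : A ⊆ N.P) :
    N.nbhdS A ⊆ N.T := by
  rintro x (hx | hx)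
  · simp only [preS, Set.mem_iUnion] at hx
    obtain ⟨a, ha, hxa⟩ := hx
    rcases hn.2.1 hxa with h | h
    · exact absurd (hA ha) (Set.disjoint_right.mp hn.1 h.2)
    · exact h.1
  · simp only [postS, Set.mem_iUnion] at hx
    obtain ⟨a, ha, hxa⟩ := hx
    rcases hn.2.1 hxa with h | h
    · exact h.2
    · exact absurd (hA ha) (Set.disjoint_right.mp hn.1 h.1)

/-- In a sequential component `A`, a transition neighboring `A` has exactly one
input place in `A` and one output place in `A`. -/
lemma seq_pre_post {N : PNet X} (hn : N.IsNet) {A : Set X} (hA : N.IsSeqComp A)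
    {t : X} (ht : t ∈ N.T) (htA : t ∈ N.nbhdS A) :
    (∃ p' ∈ A, N.pre t ∩ A = {p'}) ∧ (∃ q' ∈ A, N.post t ∩ A = {q'}) := by
  obtain ⟨hAP, hSM, _⟩ := hA
  set B := A ∪ N.nbhdS A with hB
  have htB : t ∈ B := Or.inr htA
  have htsub : t ∈ (N.subnet B).T := ⟨ht, htB⟩
  obtain ⟨⟨p', hp'⟩, ⟨q', hq'⟩⟩ := hSM.2 t htsub
  have memA : ∀ y ∈ B, (y, t) ∈ N.F ∨ (t, y) ∈ N.F → y ∈ A := by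
    rintro y (hy | hy) hyF
    · exact hy
    · exfalso
      have hyT : y ∈ N.T := nbhdS_sub_T hn hAP hy
      rcases hyF with hyF | hyF
      · exact Set.disjoint_left.mp hn.1 (mem_P_of_pre hn ht hyF) hyT
      · exact Set.disjoint_left.mp hn.1 (mem_P_of_post hn ht hyF) hyT
  constructor
  · refine ⟨p', ?_, ?_⟩
    · have hp'mem : p' ∈ (N.subnet B).pre t := by rw [hp']; rfl
      obtain ⟨hF, hp'B, -⟩ := hp'mem
      exact memA p' hp'B (Or.inl hF)
    · apply Set.Subset.antisymm
      · rintro y ⟨hyt, hyA⟩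
        have : y ∈ (N.subnet B).pre t := ⟨hyt, Or.inl hyA, htB⟩
        rwa [hp'] at this
      · rintro y rfl
        have hp'mem : y ∈ (N.subnet B).pre t := by rw [hp']; rfl
        obtain ⟨hF, hyB, -⟩ := hp'mem
        exact ⟨hF, memA y hyB (Or.inl hF)⟩
  · refine ⟨q', ?_, ?_⟩
    · have hq'mem : q' ∈ (N.subnet B).post t := by rw [hq']; rfl
      obtain ⟨hF, -, hq'B⟩ := hq'mem
      exact memA q' hq'B (Or.inr hF)
    · apply Set.Subset.antisymm
      · rintro y ⟨hyt, hyA⟩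
        have : y ∈ (N.subnet B).post t := ⟨hyt, htB, Or.inl hyA⟩
        rwa [hq'] at this
      · rintro y rfl
        have hq'mem : y ∈ (N.subnet B).post t := by rw [hq']; rfl
        obtain ⟨hF, -, hyB⟩ := hq'mem
        exact ⟨hF, memA y hyB (Or.inr hF)⟩

/-- Firing preserves the one-token invariant of sequential components. -/
lemma seq_step {N : PNet X} (hn : N.IsNet) {A : Set X} (hA : N.IsSeqComp A)
    {m : Set X} (hm : ∃ a, m ∩ A = {a}) {t : X} (ht : N.enabled m t) :
    ∃ a, N.fire m t ∩ A = {a} := by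
  obtain ⟨a, ha⟩ := hm
  by_cases htA : t ∈ N.nbhdS A
  · obtain ⟨⟨p', hp'A, hp'⟩, ⟨q', hq'A, hq'⟩⟩ := seq_pre_post hn hA ht.1 htA
    have hp'a : p' = a := by
      have : p' ∈ m ∩ A := ⟨ht.2 (by
        have : p' ∈ N.pre t ∩ A := by rw [hp']; rfl
        exact this.1), hp'A⟩
      rwa [ha] at this
    have hp'pre : p' ∈ N.pre t := by
      have : p' ∈ N.pre t ∩ A := by rw [hp']; rfl
      exact this.1
    refine ⟨q', ?_⟩
    apply Set.Subset.antisymm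
    · rintro y ⟨hy, hyA⟩
      rcases hy with ⟨hym, hynp⟩ | hyp
      · exfalso
        have : y = a := by have : y ∈ m ∩ A := ⟨hym, hyA⟩; rwa [ha] at this
        exact hynp (this ▸ hp'a ▸ hp'pre)
      · have : y ∈ N.post t ∩ A := ⟨hyp, hyA⟩
        rwa [hq'] at this
    · rintro y rfl
      have : y ∈ N.post t ∩ A := by rw [hq']; rfl
      exact ⟨Or.inr this.1, this.2⟩
  · refine ⟨a, ?_⟩
    have hpre : ∀ y ∈ A, y ∉ N.pre t := by
      intro y hy hyp
      exact htA (Or.inr (Set.mem_biUnion hy hyp))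
    have hpost : ∀ y ∈ A, y ∉ N.post t := by
      intro y hy hyp
      exact htA (Or.inl (Set.mem_biUnion hy hyp))
    rw [← ha]
    ext y
    constructor
    · rintro ⟨⟨hym, -⟩ | hyp, hyA⟩
      · exact ⟨hym, hyA⟩
      · exact absurd hyp (hpost y hyA)
    · rintro ⟨hym, hyA⟩
      exact ⟨Or.inl ⟨hym, hpre y hyA⟩, hyA⟩

/-- Key lemma: at a marking satisfying the sequential-component invariant, a
place holding a token and not consumed by `t` cannot map into the preset of
`φ t`. -/
lemma alpha_key {N1 N2 : PNet X} {φ : X → X} (hn1 : N1.IsNet) (hn2 : N2.IsNet)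
    (hα : IsAlpha N1 N2 φ) {m1 : Set X} (hm1P : m1 ⊆ N1.P)
    (hinv : ∀ A, N1.IsSeqComp A → ∃ a, m1 ∩ A = {a})
    {t : X} (ht : N1.enabled m1 t) (htT : φ t ∈ N2.T)
    {p : X} (hp : p ∈ m1) (hpt : p ∉ N1.pre t) : φ p ∉ N2.pre (φ t) := by
  intro hcon
  have hp2P : φ p ∈ N2.P := mem_P_of_pre hn2 htT hcon
  obtain ⟨-, -, -, -, hseqc⟩ := hα.2.2.2.2.2.2 (φ p) hp2P
  obtain ⟨A, hA, hpA, hsub⟩ := hseqc p ⟨⟨Or.inl (hm1P hp), rfl⟩, hm1P hp⟩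
  have htA : t ∈ N1.nbhdS A := hsub ⟨ht.1, Or.inr hcon⟩
  obtain ⟨⟨p', hp'A, hp'⟩, -⟩ := seq_pre_post hn1 hA ht.1 htA
  obtain ⟨a, ha⟩ := hinv A hA
  have hpa : p = a := by
    have : p ∈ m1 ∩ A := ⟨hp, hpA⟩
    rwa [ha] at this
  have hp'pre : p' ∈ N1.pre t := by
    have : p' ∈ N1.pre t ∩ A := by rw [hp']; rfl
    exact this.1
  have hp'a : p' = a := by
    have : p' ∈ m1 ∩ A := ⟨ht.2 hp'pre, hp'A⟩
    rwa [ha] at this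
  exact hpt (hpa ▸ hp'a ▸ hp'pre)

lemma alpha_fire_image {N1 N2 : PNet X} {φ : X → X} (hn1 : N1.IsNet)
    (hn2 : N2.IsNet) (hα : IsAlpha N1 N2 φ) {m1 : Set X} (hm1P : m1 ⊆ N1.P)
    (hinv : ∀ A, N1.IsSeqComp A → ∃ a, m1 ∩ A = {a})
    {t : X} (ht : N1.enabled m1 t) (htT : φ t ∈ N2.T) :
    φ '' (N1.fire m1 t) = N2.fire (φ '' m1) (φ t) := by
  obtain ⟨hpre, hpost⟩ := hα.2.2.2.2.1 t ht.1 htT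
  ext y
  constructor
  · rintro ⟨x, hx, rfl⟩
    rcases hx with ⟨hxm, hxp⟩ | hxpost
    · exact Or.inl ⟨⟨x, hxm, rfl⟩, alpha_key hn1 hn2 hα hm1P hinv ht htT hxm hxp⟩
    · exact Or.inr (hpost ▸ ⟨x, hxpost, rfl⟩)
  · rintro (⟨⟨x, hxm, rfl⟩, hynp⟩ | hyp)
    · refine ⟨x, Or.inl ⟨hxm, ?_⟩, rfl⟩
      intro hxp
      exact hynp (hpre ▸ ⟨x, hxp, rfl⟩)
    · rw [← hpost] at hyp
      obtain ⟨x, hx, rfl⟩ := hyp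
      exact ⟨x, Or.inr hx, rfl⟩

lemma alpha_fire_image_place {N1 N2 : PNet X} {φ : X → X} (hn1 : N1.IsNet)
    (hα : IsAlpha N1 N2 φ) {m1 : Set X}
    {t : X} (ht : N1.enabled m1 t) (htP : φ t ∈ N2.P) :
    φ '' m1 = φ '' (N1.fire m1 t) := by
  have hnb : φ '' N1.nbhd t = {φ t} := hα.2.2.2.2.2.1 t ht.1 htP
  obtain ⟨hprene, hpostne⟩ := hn1.2.2.1 t ht.1
  have himsub : ∀ s : Set X, s ⊆ N1.nbhd t → s.Nonempty → φ '' s = {φ t} := by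
    intro s hs hne
    apply Set.Subset.antisymm
    · exact (Set.image_mono (f := φ) hs).trans hnb.subset
    · rintro y rfl
      obtain ⟨x, hx⟩ := hne
      have : φ x ∈ ({φ t} : Set X) := hnb ▸ ⟨x, hs hx, rfl⟩
      rw [← this]
      exact ⟨x, hx, rfl⟩
  have hpreim : φ '' N1.pre t = {φ t} :=
    himsub _ Set.subset_union_left hprene
  have hpostim : φ '' N1.post t = {φ t} :=
    himsub _ Set.subset_union_right hpostne
  conv_lhs => rw [← Set.diff_union_of_subset ht.2]
  rw [fire, Set.image_union, Set.image_union, hpreim, hpostim]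

end PNet

open PNet in
/-- α-morphisms preserve reachable markings and transition
firings: the image of a reachable marking of `N1` is reachable in `N2`, and a
firing `m1 [t⟩ m1'` of `N1` maps either to a firing of `φ t` (if `φ t` is a
transition of `N2`) or to a stuttering step (if `φ t` is a place of `N2`). -/
theorem alpha_preserves_reach {X : Type} (N1 N2 : PNet X) (φ : X → X)
    (hn1 : N1.IsNet) (hn2 : N2.IsNet) (hsmd1 : N1.SMD) (hsmd2 : N2.SMD)
    (hα : IsAlpha N1 N2 φ) :
    ∀ m1 ∈ N1.reach N1.m0,
      φ '' m1 ∈ N2.reach N2.m0 ∧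
      ∀ t, N1.enabled m1 t →
        (φ t ∈ N2.T →
           N2.enabled (φ '' m1) (φ t) ∧ φ '' (N1.fire m1 t) = N2.fire (φ '' m1) (φ t)) ∧
        (φ t ∈ N2.P → φ '' m1 = φ '' (N1.fire m1 t)) := by
  intro m1 hm1
  have H : m1 ⊆ N1.P ∧ (∀ A, N1.IsSeqComp A → ∃ a, m1 ∩ A = {a}) ∧
      φ '' m1 ∈ N2.reach N2.m0 := by
    induction hm1 with
    | refl =>
        refine ⟨hn1.2.2.2.1, fun A hA => hA.2.2, ?_⟩
        show Relation.ReflTransGen N2.step N2.m0 (φ '' N1.m0)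
        rw [hα.2.2.2.1]
    | tail hab hbc ih =>
        obtain ⟨t, htE, rfl⟩ := hbc
        refine ⟨?_, fun A hA => seq_step hn1 hA (ih.2.1 A hA) htE, ?_⟩
        · rintro y (⟨hym, -⟩ | hyp)
          · exact ih.1 hym
          · exact mem_P_of_post hn1 htE.1 hyp
        · rcases hα.1 t (Or.inr htE.1) with htP | htT
          · show Relation.ReflTransGen N2.step N2.m0 _
            rw [← alpha_fire_image_place hn1 hα htE htP]
            exact ih.2.2
          · refine Relation.ReflTransGen.tail ih.2.2 ⟨φ t, ⟨htT, ?_⟩,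
              alpha_fire_image hn1 hn2 hα ih.1 ih.2.1 htE htT⟩
            rw [← (hα.2.2.2.2.1 t htE.1 htT).1]
            exact Set.image_mono (f := φ) htE.2
  refine ⟨H.2.2, fun t htE => ⟨fun htT => ⟨⟨htT, ?_⟩,
      alpha_fire_image hn1 hn2 hα H.1 H.2.1 htE htT⟩,
    fun htP => alpha_fire_image_place hn1 hα htE htP⟩⟩
  rw [← (hα.2.2.2.2.1 t htE.1 htT).1]
  exact Set.image_mono (f := φ) htE.2
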